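/- arXiv:1907.08927 — 3 statements merged into one kernel-verified Lean document; each statement's English description precedes it below -/
import Mathlib

section
/- Let α ≥ 2, h > 0, N ≥ 1, points (x_i,y_i) ∈ ℝ², and rates r_i with 0 < r_min ≤ r_i ≤ r_max. Let (x_med, y_med) be the coordinate-wise medians, and let (x_opt, y_opt) be any point in ℝ². Then ∑_i ((x_i−x_med)² + (y_i−y_med)² + h²)^{α/2} ≤ 2^{α/2} N^{α/2−1} (r_max/r_min) · ∑_i ((x_i−x_opt)² + (y_i−y_opt)² + h²)^{α/2}. -/
open Finset
open scoped NNReal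

/-- Two-term superadditivity of `rpow` for `p ≥ 1`. -/
lemma my_rpow_superadd {a b p : ℝ} (ha : 0 ≤ a) (hb : 0 ≤ b) (hp : 1 ≤ p) :
    a ^ p + b ^ p ≤ (a + b) ^ p := by
  have := NNReal.add_rpow_le_rpow_add a.toNNReal b.toNNReal hp
  have h2 : ((a.toNNReal + b.toNNReal : ℝ≥0) : ℝ) = a + b := by
    simp [Real.coe_toNNReal _ ha, Real.coe_toNNReal _ hb]
  have h3 := NNReal.coe_le_coe.2 this
  rwa [NNReal.coe_add, NNReal.coe_rpow, NNReal.coe_rpow, NNReal.coe_rpow, h2,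
    Real.coe_toNNReal _ ha, Real.coe_toNNReal _ hb] at h3

/-- Superadditivity of `rpow` over a finite sum for `p ≥ 1`. -/
lemma my_sum_rpow_le_rpow_sum {ι : Type*} (s : Finset ι) (f : ι → ℝ)
    (hf : ∀ i ∈ s, 0 ≤ f i) {p : ℝ} (hp : 1 ≤ p) :
    ∑ i ∈ s, f i ^ p ≤ (∑ i ∈ s, f i) ^ p := by
  induction s using Finset.cons_induction with
  | empty => simp [Real.zero_rpow (by linarith : p ≠ 0)]
  | cons a s ha ih =>
    rw [Finset.sum_cons, Finset.sum_cons]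
    have h1 : ∑ i ∈ s, f i ^ p ≤ (∑ i ∈ s, f i) ^ p :=
      ih fun i hi => hf i (Finset.mem_cons_of_mem hi)
    have h2 : f a ^ p + (∑ i ∈ s, f i) ^ p ≤ (f a + ∑ i ∈ s, f i) ^ p :=
      my_rpow_superadd (hf a (Finset.mem_cons_self a s))
        (Finset.sum_nonneg fun i hi => hf i (Finset.mem_cons_of_mem hi)) hp
    linarith

/-- Variance decomposition: for `μ` the mean, `∑ (f i - c)² = ∑ (f i - μ)² + N (μ - c)²`. -/
lemma my_sum_sq_decomp {N : ℕ} (hN : 1 ≤ N) (f : Fin N → ℝ) (c : ℝ) :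
    ∑ i, (f i - c) ^ 2
      = ∑ i, (f i - (∑ j, f j) / N) ^ 2 + N * ((∑ j, f j) / N - c) ^ 2 := by
  have hN0 : (N : ℝ) ≠ 0 := Nat.cast_ne_zero.2 (by omega)
  set μ := (∑ j, f j) / N with hμ
  have hsum : ∑ j, f j = N * μ := by rw [hμ, mul_div_assoc', mul_div_cancel_left₀ _ hN0]
  have : ∑ i, (f i - c) ^ 2 - ∑ i, (f i - μ) ^ 2
      = ∑ i, ((f i - c) ^ 2 - (f i - μ) ^ 2) := by rw [Finset.sum_sub_distrib]
  have key : ∑ i, ((f i - c) ^ 2 - (f i - μ) ^ 2)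
      = ∑ i, ((μ - c) * (2 * f i - c - μ)) := by
    apply Finset.sum_congr rfl; intro i _; ring
  have expand : ∑ i, ((μ - c) * (2 * f i - c - μ))
      = (μ - c) * (2 * (∑ j, f j) - N * c - N * μ) := by
    rw [← Finset.mul_sum]
    congr 1
    rw [Finset.sum_sub_distrib, Finset.sum_sub_distrib, ← Finset.mul_sum]
    simp [Finset.card_univ, mul_comm]
  rw [hsum] at expand
  have : ∑ i, (f i - c) ^ 2 - ∑ i, (f i - μ) ^ 2 = (N : ℝ) * (μ - c) ^ 2 := by
    rw [this, key, expand]; ring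
  linarith

/-- The median is within one standard deviation of the mean (squared form),
together with variance decomposition: `∑ (f i - m)² ≤ 2 ∑ (f i - c)²`. -/
lemma my_median_sq_bound {N : ℕ} (hN : 1 ≤ N) (f : Fin N → ℝ) (m : ℝ)
    (h1 : N ≤ 2 * (univ.filter (fun i => f i ≤ m)).card)
    (h2 : N ≤ 2 * (univ.filter (fun i => m ≤ f i)).card) (c : ℝ) :
    ∑ i, (f i - m) ^ 2 ≤ 2 * ∑ i, (f i - c) ^ 2 := by
  have hN0 : (0 : ℝ) < N := by exact_mod_cast Nat.pos_of_ne_zero (by omega)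
  set μ := (∑ j, f j) / N with hμ
  -- Step 1: median minimizes L1 distance, in particular vs. the mean.
  have abs_min : ∀ d : ℝ, ∑ i, |f i - m| ≤ ∑ i, |f i - d| := by
    have key : ∀ (g : Fin N → ℝ) (m' d : ℝ), m' ≤ d →
        N ≤ 2 * (univ.filter (fun i => g i ≤ m')).card →
        ∑ i, |g i - m'| ≤ ∑ i, |g i - d| := by
      intro g m' d hmd hcard
      have hsplit : ∀ i : Fin N, |g i - d| - |g i - m'| ≥
          (if g i ≤ m' then (d - m') else -(d - m')) := by
        intro i
        by_cases hc : g i ≤ m'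
        · simp only [hc, if_true]
          rw [abs_of_nonpos (by linarith), abs_of_nonpos (by linarith)]
          linarith
        · simp only [hc, if_false]
          have := abs_sub_abs_le_abs_sub (g i - m') (g i - d)
          have h2 : |g i - m' - (g i - d)| = d - m' := by
            rw [show g i - m' - (g i - d) = d - m' by ring, abs_of_nonneg (by linarith)]
          linarith [abs_sub_abs_le_abs_sub (g i - m') (g i - d), h2 ▸ this]
      have hsum : ∑ i, (if g i ≤ m' then (d - m') else -(d - m'))
          ≤ ∑ i, (|g i - d| - |g i - m'|) :=
        Finset.sum_le_sum fun i _ => hsplit i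
      have hval : ∑ i, (if g i ≤ m' then (d - m') else -(d - m'))
          = ((univ.filter (fun i => g i ≤ m')).card : ℝ) * (d - m')
            - ((N : ℝ) - (univ.filter (fun i => g i ≤ m')).card) * (d - m') := by
        rw [Finset.sum_ite, Finset.sum_const, Finset.sum_const]
        have hcc : (univ.filter (fun i => ¬ g i ≤ m')).card
            = N - (univ.filter (fun i => g i ≤ m')).card := by
          rw [Finset.filter_not, Finset.card_sdiff_of_subset (Finset.filter_subset _ _)]
          simp [Finset.card_univ]
        rw [hcc]
        have hle : (univ.filter (fun i => g i ≤ m')).card ≤ N := by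
          simpa [Finset.card_univ] using Finset.card_filter_le univ (fun i => g i ≤ m')
        simp only [nsmul_eq_mul, Nat.cast_sub hle]
        ring
      have hpos : 0 ≤ ∑ i, (|g i - d| - |g i - m'|) := by
        refine le_trans ?_ hsum
        rw [hval]
        have : (N : ℝ) ≤ 2 * ((univ.filter (fun i => g i ≤ m')).card : ℝ) := by
          exact_mod_cast hcard
        nlinarith [sub_nonneg.2 hmd]
      rw [Finset.sum_sub_distrib] at hpos
      linarith
    intro d
    rcases le_total m d with hmd | hdm
    · exact key f m d hmd h1
    · have := key (fun i => -f i) (-m) (-d) (by linarith) (by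
        have : (univ.filter (fun i => -f i ≤ -m)) = (univ.filter (fun i => m ≤ f i)) := by
          apply Finset.filter_congr; intro i _; simp
        rw [this]; exact h2)
      simpa [abs_sub_comm, show ∀ a b : ℝ, -a - -b = -(a - b) by intros; ring] using this
  -- Step 2: N (μ - m)² ≤ ∑ (f i - μ)².
  have hmean : ∑ i, (f i - m) = (N : ℝ) * (μ - m) := by
    rw [Finset.sum_sub_distrib]
    simp only [Finset.sum_const, Finset.card_univ, Fintype.card_fin, nsmul_eq_mul, hμ]
    field_simp
  have habs1 : |∑ i, (f i - m)| ≤ ∑ i, |f i - m| :=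
    Finset.abs_sum_le_sum_abs _ _
  have habs2 : ∑ i, |f i - m| ≤ ∑ i, |f i - μ| := abs_min μ
  have hcs : (∑ i, |f i - μ|) ^ 2 ≤ (N : ℝ) * ∑ i, (f i - μ) ^ 2 := by
    have := sq_sum_le_card_mul_sum_sq (s := (univ : Finset (Fin N)))
      (f := fun i => |f i - μ|)
    simpa [Finset.card_univ, sq_abs] using this
  have hvar : (N : ℝ) * (μ - m) ^ 2 ≤ ∑ i, (f i - μ) ^ 2 := by
    have h0 : 0 ≤ ∑ i, |f i - m| := Finset.sum_nonneg fun i _ => abs_nonneg _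
    have hA : ((N : ℝ) * (μ - m)) ^ 2 ≤ (∑ i, |f i - μ|) ^ 2 := by
      rw [← hmean]
      calc (∑ i, (f i - m)) ^ 2 = |∑ i, (f i - m)| ^ 2 := (sq_abs _).symm
        _ ≤ (∑ i, |f i - μ|) ^ 2 := by
            apply pow_le_pow_left₀ (abs_nonneg _) (le_trans habs1 habs2)
    have := le_trans hA hcs
    nlinarith [sq_nonneg (μ - m)]
  -- Step 3: combine with the variance decomposition.
  have d1 := my_sum_sq_decomp hN f m
  have d2 := my_sum_sq_decomp hN f c
  rw [← hμ] at d1 d2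
  nlinarith [sq_nonneg (μ - c), mul_nonneg (le_of_lt hN0) (sq_nonneg (μ - c))]

theorem median_vs_optimal_core_inequality
    (N : ℕ) (hN : 1 ≤ N) (α h : ℝ) (hα : 2 ≤ α) (hh : 0 < h)
    (x y : Fin N → ℝ) (r : Fin N → ℝ) (rmin rmax : ℝ)
    (hrmin : 0 < rmin) (hr : ∀ i, rmin ≤ r i ∧ r i ≤ rmax)
    (xmed ymed : ℝ)
    (hx1 : N ≤ 2 * (univ.filter (fun i => x i ≤ xmed)).card)
    (hx2 : N ≤ 2 * (univ.filter (fun i => xmed ≤ x i)).card)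
    (hy1 : N ≤ 2 * (univ.filter (fun i => y i ≤ ymed)).card)
    (hy2 : N ≤ 2 * (univ.filter (fun i => ymed ≤ y i)).card)
    (xopt yopt : ℝ) :
    ∑ i, ((x i - xmed) ^ 2 + (y i - ymed) ^ 2 + h ^ 2) ^ (α / 2) ≤
      (2 : ℝ) ^ (α / 2) * (N : ℝ) ^ (α / 2 - 1) * (rmax / rmin) *
        ∑ i, ((x i - xopt) ^ 2 + (y i - yopt) ^ 2 + h ^ 2) ^ (α / 2) := by
  have hp : (1 : ℝ) ≤ α / 2 := by linarith
  set p := α / 2 with hpdef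
  set a : Fin N → ℝ := fun i => (x i - xmed) ^ 2 + (y i - ymed) ^ 2 + h ^ 2 with ha
  set b : Fin N → ℝ := fun i => (x i - xopt) ^ 2 + (y i - yopt) ^ 2 + h ^ 2 with hb
  have ha0 : ∀ i, 0 ≤ a i := fun i => by positivity
  have hb0 : ∀ i, 0 ≤ b i := fun i => by positivity
  -- ∑ a ≤ 2 ∑ b
  have hx := my_median_sq_bound hN x xmed hx1 hx2 xopt
  have hy := my_median_sq_bound hN y ymed hy1 hy2 yopt
  have hsum : ∑ i, a i ≤ 2 * ∑ i, b i := by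
    have e1 : ∑ i, a i = ∑ i, (x i - xmed) ^ 2 + ∑ i, (y i - ymed) ^ 2
        + (N : ℝ) * h ^ 2 := by
      simp only [ha, Finset.sum_add_distrib, Finset.sum_const, Finset.card_univ,
        Fintype.card_fin, nsmul_eq_mul]
    have e2 : ∑ i, b i = ∑ i, (x i - xopt) ^ 2 + ∑ i, (y i - yopt) ^ 2
        + (N : ℝ) * h ^ 2 := by
      simp only [hb, Finset.sum_add_distrib, Finset.sum_const, Finset.card_univ,
        Fintype.card_fin, nsmul_eq_mul]
    have hNh : 0 ≤ (N : ℝ) * h ^ 2 := by positivity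
    rw [e1, e2]; linarith
  -- chain of inequalities
  have step1 : ∑ i, a i ^ p ≤ (∑ i, a i) ^ p :=
    my_sum_rpow_le_rpow_sum univ a (fun i _ => ha0 i) hp
  have hsa : 0 ≤ ∑ i, a i := Finset.sum_nonneg fun i _ => ha0 i
  have hsb : 0 ≤ ∑ i, b i := Finset.sum_nonneg fun i _ => hb0 i
  have step2 : (∑ i, a i) ^ p ≤ (2 * ∑ i, b i) ^ p :=
    Real.rpow_le_rpow hsa hsum (by linarith)
  have step3 : (2 * ∑ i, b i) ^ p = 2 ^ p * (∑ i, b i) ^ p :=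
    Real.mul_rpow (by norm_num) hsb
  have step4 : (∑ i, b i) ^ p ≤ (N : ℝ) ^ (p - 1) * ∑ i, b i ^ p := by
    have := Real.rpow_sum_le_const_mul_sum_rpow_of_nonneg (s := (univ : Finset (Fin N)))
      (f := b) hp (fun i _ => hb0 i)
    simpa [Finset.card_univ] using this
  have hrr : (1 : ℝ) ≤ rmax / rmin := by
    have h0 := hr ⟨0, by omega⟩
    have : rmin ≤ rmax := le_trans h0.1 h0.2
    rw [le_div_iff₀ hrmin]; linarith
  have h2p : (0 : ℝ) ≤ 2 ^ p := Real.rpow_nonneg (by norm_num) p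
  have hNp : (0 : ℝ) ≤ (N : ℝ) ^ (p - 1) := Real.rpow_nonneg (Nat.cast_nonneg N) _
  have hsbp : 0 ≤ ∑ i, b i ^ p :=
    Finset.sum_nonneg fun i _ => Real.rpow_nonneg (hb0 i) p
  calc ∑ i, a i ^ p ≤ (∑ i, a i) ^ p := step1
    _ ≤ (2 * ∑ i, b i) ^ p := step2
    _ = 2 ^ p * (∑ i, b i) ^ p := step3
    _ ≤ 2 ^ p * ((N : ℝ) ^ (p - 1) * ∑ i, b i ^ p) :=
        mul_le_mul_of_nonneg_left step4 h2p
    _ ≤ 2 ^ p * (N : ℝ) ^ (p - 1) * (rmax / rmin) * ∑ i, b i ^ p := by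
        nlinarith [mul_nonneg h2p hNp, mul_nonneg (mul_nonneg h2p hNp) hsbp]
end

section
/- Fix S > 0 (sum of others' rates), P > 0, D > 0, g > 0, B > 0, b ≥ 0, α ≥ 2. The best-response problem max_{r ≥ 0} (r/(r+S))·P − (D^α/g)(2^{r/B} − 1) − b·r has a unique maximizer. -/
open Set Real Filter

theorem best_response_unique_maximizer
    (S P D g B b α : ℝ) (hS : 0 < S) (hP : 0 < P) (hD : 0 < D)
    (hg : 0 < g) (hB : 0 < B) (hb : 0 ≤ b) (hα : 2 ≤ α) :
    ∃! r : ℝ, r ∈ Set.Ici (0 : ℝ) ∧ ∀ s ∈ Set.Ici (0 : ℝ),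
      s / (s + S) * P - D ^ α / g * ((2 : ℝ) ^ (s / B) - 1) - b * s ≤
      r / (r + S) * P - D ^ α / g * ((2 : ℝ) ^ (r / B) - 1) - b * r := by
  have h2 : ∀ x : ℝ, (2 : ℝ) ^ x = Real.exp (Real.log 2 * x) := fun x =>
    Real.rpow_def_of_pos two_pos x
  simp only [h2]
  set c : ℝ := D ^ α / g with hc_def
  have hc : 0 < c := div_pos (Real.rpow_pos_of_pos hD α) hg
  set f : ℝ → ℝ := fun r => r / (r + S) * P - c * (Real.exp (Real.log 2 * (r / B)) - 1) - b * r
    with hf_def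
  have hlog2 : 0 < Real.log 2 := Real.log_pos one_lt_two
  -- derivative
  set F' : ℝ → ℝ := fun r =>
    S / (r + S) ^ 2 * P - c * (Real.log 2 / B * Real.exp (Real.log 2 * (r / B))) - b with hF'_def
  have hderiv : ∀ r : ℝ, r + S ≠ 0 → HasDerivAt f (F' r) r := by
    intro r hr
    have h1 : HasDerivAt (fun r : ℝ => r / (r + S)) ((1 * (r + S) - r * 1) / (r + S) ^ 2) r :=
      (hasDerivAt_id r).div ((hasDerivAt_id r).add_const S) hr
    have hin : HasDerivAt (fun r : ℝ => Real.log 2 * (r / B)) (Real.log 2 * (1 / B)) r :=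
      ((hasDerivAt_id r).div_const B).const_mul (Real.log 2)
    have hexp := hin.exp
    have := ((h1.mul_const P).sub
        ((hexp.sub_const 1).const_mul c)).sub ((hasDerivAt_id r).const_mul b)
    refine this.congr_deriv ?_
    simp only [hF'_def]
    field_simp
    ring
  have hF'deriv : ∀ x : ℝ, x + S ≠ 0 →
      HasDerivAt F' (-2 * S / (x + S) ^ 3 * P -
        c * ((Real.log 2 / B) ^ 2 * Real.exp (Real.log 2 * (x / B)))) x := by
    intro x hx
    have hsq : HasDerivAt (fun r : ℝ => (r + S) ^ 2) (2 * (x + S)) x := by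
      have := ((hasDerivAt_id x).add_const S).pow 2
      refine this.congr_deriv ?_
      simp
    have hsqne : (x + S) ^ 2 ≠ 0 := pow_ne_zero _ hx
    have hinv : HasDerivAt (fun r : ℝ => S / (r + S) ^ 2)
        (-(S * (2 * (x + S)) / ((x + S) ^ 2) ^ 2)) x := by
      have := (hasDerivAt_const x S).div hsq hsqne
      refine this.congr_deriv ?_
      ring
    have hin : HasDerivAt (fun r : ℝ => Real.log 2 * (r / B)) (Real.log 2 * (1 / B)) x :=
      ((hasDerivAt_id x).div_const B).const_mul (Real.log 2)
    have hexp := hin.exp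
    have := ((hinv.mul_const P).sub
        ((hexp.const_mul (Real.log 2 / B)).const_mul c)).sub_const b
    refine this.congr_deriv ?_
    have hxS : x + S ≠ 0 := hx
    field_simp
  -- continuity on [0, ∞)
  have hcont : ContinuousOn f (Ici 0) := by
    intro x hx
    have hx0 : (0:ℝ) ≤ x := hx
    have : x + S ≠ 0 := ne_of_gt (by linarith)
    exact ((hderiv x this).continuousAt).continuousWithinAt
  -- strict concavity
  have hconc : StrictConcaveOn ℝ (Ici (0:ℝ)) f := by
    apply strictConcaveOn_of_deriv2_neg (convex_Ici 0) hcont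
    intro x hx
    rw [interior_Ici] at hx
    have hx0 : (0:ℝ) < x := hx
    have hxS : 0 < x + S := by linarith
    have hne : x + S ≠ 0 := ne_of_gt hxS
    have hEq : deriv f =ᶠ[nhds x] F' := by
      filter_upwards [Ioi_mem_nhds (show -S < x by linarith)] with r hr
      have : r + S ≠ 0 := by simp only [mem_Ioi] at hr; intro h; linarith
      exact (hderiv r this).deriv
    have : deriv^[2] f x = deriv F' x := by
      simp only [Function.iterate_succ, Function.iterate_zero, Function.comp_apply, id]
      exact hEq.deriv_eq
    rw [this, (hF'deriv x hne).deriv]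
    have h1 : -2 * S / (x + S) ^ 3 * P < 0 := by
      apply mul_neg_of_neg_of_pos _ hP
      apply div_neg_of_neg_of_pos (by linarith) (by positivity)
    have h2 : 0 < c * ((Real.log 2 / B) ^ 2 * Real.exp (Real.log 2 * (x / B))) := by
      positivity
    linarith
  -- existence of max
  have hf0 : f 0 = 0 := by simp [hf_def]
  have hupper : ∀ r : ℝ, 0 ≤ r → f r ≤ P - c * Real.log 2 / B * r := by
    intro r hr
    have hxS : 0 < r + S := by linarith
    have ht1 : r / (r + S) * P ≤ P := by
      have : r / (r + S) ≤ 1 := by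
        rw [div_le_one hxS]; linarith
      nlinarith
    have ht2 : Real.log 2 * (r / B) + 1 ≤ Real.exp (Real.log 2 * (r / B)) :=
      Real.add_one_le_exp _
    have ht3 : c * (Real.log 2 * (r / B)) ≤ c * (Real.exp (Real.log 2 * (r / B)) - 1) := by
      apply mul_le_mul_of_nonneg_left (by linarith) hc.le
    have ht4 : 0 ≤ b * r := mul_nonneg hb hr
    have : c * (Real.log 2 * (r / B)) = c * Real.log 2 / B * r := by ring
    simp only [hf_def]
    linarith [this ▸ ht3]
  set M : ℝ := P * B / (c * Real.log 2) with hM_def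
  have hM : 0 < M := by positivity
  have hfar : ∀ r : ℝ, M < r → f r < f 0 := by
    intro r hr
    have hr0 : 0 ≤ r := le_of_lt (lt_of_le_of_lt hM.le hr)
    have h1 := hupper r hr0
    have hk : 0 < c * Real.log 2 / B := by positivity
    have hMP : c * Real.log 2 / B * M = P := by
      rw [hM_def]; field_simp
    have hmul := mul_lt_mul_of_pos_left hr hk
    rw [hf0]
    have key : P - c * Real.log 2 / B * r < 0 := by linarith
    exact lt_of_le_of_lt h1 key
  obtain ⟨r0, hr0mem, hr0max⟩ := (isCompact_Icc (a := (0:ℝ)) (b := M)).exists_isMaxOn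
    (nonempty_Icc.2 hM.le) (hcont.mono (Icc_subset_Ici_self))
  have hr0Ici : r0 ∈ Ici (0:ℝ) := hr0mem.1
  have hmax : IsMaxOn f (Ici 0) r0 := by
    intro s hs
    rcases le_or_gt s M with hsM | hsM
    · exact hr0max ⟨hs, hsM⟩
    · have := hfar s hsM
      have h0 : f 0 ≤ f r0 := hr0max ⟨le_refl 0, hM.le⟩
      simp only [mem_setOf_eq]
      linarith
  refine ⟨r0, ⟨hr0Ici, fun s hs => hmax hs⟩, ?_⟩
  rintro r' ⟨hr'Ici, hr'max⟩
  exact hconc.eq_of_isMaxOn (fun s hs => hr'max s hs) hmax hr'Ici hr0Ici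
end

section
/- For r_i > 0, i = 1,…,N with N ≥ 2, define the N×N matrix H by H_{ii} = −2P·(∑_{k≠i} r_k)/(∑_k r_k)³ − c_i with c_i > 0, and H_{ij} = P·(r_i − ∑_{k≠i} r_k)/(∑_k r_k)³ for j ≠ i, where P > 0. If r_i ≤ ∑_{k≠i} r_k for all i, then H + Hᵀ is negative definite. -/
open Finset

theorem rate_game_matrix_negative_definite
    (N : ℕ) (hN : 2 ≤ N) (r : Fin N → ℝ) (hr : ∀ i, 0 < r i)
    (P : ℝ) (hP : 0 < P) (c : Fin N → ℝ) (hc : ∀ i, 0 < c i)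
    (H : Matrix (Fin N) (Fin N) ℝ)
    (hH : ∀ i j, H i j =
      if i = j then
        -(2 * P * (∑ k ∈ univ.erase i, r k)) / (∑ k, r k) ^ 3 - c i
      else
        P * (r i - ∑ k ∈ univ.erase i, r k) / (∑ k, r k) ^ 3)
    (hdom : ∀ i, r i ≤ ∑ k ∈ univ.erase i, r k) :
    (-(H + H.transpose)).PosDef := by
  have hS : 0 < ∑ k, r k :=
    Finset.sum_pos (fun i _ => hr i) ⟨⟨0, by omega⟩, Finset.mem_univ _⟩
  set S := ∑ k, r k with hSdef
  have hsum : ∀ i : Fin N, ∑ k ∈ univ.erase i, r k = S - r i := by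
    intro i
    rw [Finset.sum_erase_eq_sub (Finset.mem_univ i)]
  have hM : ∀ i j, (-(H + H.transpose)) i j =
      2*P*(S - r i - r j)/S^3 + (if i = j then 2*P/S^2 + 2*c i else 0) := by
    intro i j
    simp only [Matrix.neg_apply, Matrix.add_apply, Matrix.transpose_apply, hH i j, hH j i, hsum]
    by_cases h : i = j
    · subst h
      simp only [if_pos rfl, ↓reduceIte]
      field_simp
      ring
    · simp only [if_neg h, if_neg (Ne.symm h)]
      field_simp
      ring
  rw [Matrix.posDef_iff_dotProduct_mulVec]
  constructor
  · show (-(H + H.transpose)).conjTranspose = _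
    ext i j
    simp only [Matrix.conjTranspose_apply, Matrix.neg_apply, Matrix.add_apply,
      Matrix.transpose_apply, star_trivial]
    ring
  · intro x hx
    set X1 := ∑ i, x i with hX1
    set X2 := ∑ i, x i ^ 2 with hX2
    set R := ∑ i, r i * x i with hR
    have hE : dotProduct (star x) ((-(H + H.transpose)).mulVec x)
        = (2*P/S^3) * (S*X1^2 + S*X2 - 2*R*X1) + 2*∑ i, c i * x i^2 := by
      simp only [dotProduct, Matrix.mulVec, star_trivial, Pi.star_apply]
      have this1 : ∀ i, (∑ j, (-(H + H.transpose)) i j * x j)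
          = (2*P/S^3) * ((S - r i)*X1 - R) + (2*P/S^2 + 2*c i) * x i := by
        intro i
        simp only [hM, add_mul, ite_mul, zero_mul]
        rw [Finset.sum_add_distrib]
        simp only [Finset.sum_ite_eq, Finset.mem_univ, if_true]
        congr 1
        have step : ∀ j, 2*P*(S - r i - r j)/S^3 * x j
            = (2*P/S^3*(S - r i))* x j - (2*P/S^3)*(r j * x j) := by
          intro j; field_simp
        rw [Finset.sum_congr rfl (fun j _ => step j), Finset.sum_sub_distrib,
          ← Finset.mul_sum, ← Finset.mul_sum, ← hX1, ← hR]
        ring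
      rw [Finset.sum_congr rfl (fun i _ => by rw [this1 i])]
      have expand : ∑ i, x i * ((2*P/S^3) * ((S - r i)*X1 - R) + (2*P/S^2 + 2*c i) * x i)
          = (2*P/S^3*S*X1)*X1 - (2*P/S^3*X1)*R - (2*P/S^3*R)*X1 + (2*P/S^2)*X2
            + 2*∑ i, c i * x i^2 := by
        rw [Finset.sum_congr rfl (fun i _ => show
          x i * ((2*P/S^3) * ((S - r i)*X1 - R) + (2*P/S^2 + 2*c i) * x i)
            = (2*P/S^3*S*X1)*x i - (2*P/S^3*X1)*(r i * x i) - (2*P/S^3*R)*x i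
              + (2*P/S^2)*(x i^2) + 2*(c i * x i^2) by ring)]
        simp only [Finset.sum_add_distrib, Finset.sum_sub_distrib, ← Finset.mul_sum,
          ← hX1, ← hX2, ← hR]
      rw [expand]
      field_simp
      ring
    rw [hE]
    have h2 : ∀ i, x i ^ 2 ≤ X2 := fun i =>
      Finset.single_le_sum (fun j _ => sq_nonneg (x j)) (Finset.mem_univ i)
    have hRX : 2*R*X1 ≤ S*X2 + S*X1^2 := by
      have step1 : ∑ i, 2*(r i * x i)*X1 = 2*R*X1 := by
        rw [Finset.sum_congr rfl (fun i _ => show 2*(r i * x i)*X1 = (2*X1)*(r i * x i) by ring),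
          ← Finset.mul_sum, ← hR]
        ring
      have step2 : ∑ i, 2*(r i * x i)*X1 ≤ ∑ i, r i * (x i^2 + X1^2) := by
        apply Finset.sum_le_sum
        intro i _
        nlinarith [sq_nonneg (x i - X1), (hr i).le]
      have step3 : ∑ i, r i * (x i^2 + X1^2) ≤ ∑ i, r i * (X2 + X1^2) := by
        apply Finset.sum_le_sum
        intro i _
        have := h2 i
        nlinarith [(hr i).le]
      have step4 : ∑ i, r i * (X2 + X1^2) = S*X2 + S*X1^2 := by
        rw [← Finset.sum_mul, hSdef]
        ring
      linarith
    have hc2 : 0 < ∑ i, c i * x i ^ 2 := by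
      obtain ⟨i, hi⟩ := Function.ne_iff.mp hx
      apply Finset.sum_pos'
      · intro j _
        exact mul_nonneg (hc j).le (sq_nonneg _)
      · exact ⟨i, Finset.mem_univ i, mul_pos (hc i) (sq_pos_of_ne_zero hi)⟩
    have hfrac : 0 ≤ (2*P/S^3) * (S*X1^2 + S*X2 - 2*R*X1) := by
      apply mul_nonneg
      · positivity
      · linarith
    linarith
end
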